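/- For any four pairwise distinct closed disks D₁, D₂, D₃, D₄ in ℝ², the family of point-complement ranges does not shatter {D₁, D₂, D₃, D₄}: there exists a subset S ⊆ {1, 2, 3, 4} such that no point v ∈ ℝ² satisfies {i : v ∉ Dᵢ} = S. Consequently, for any finite set 𝒟 of closed disks, the range space (𝒟, {{D ∈ 𝒟 : v ∉ D} : v ∈ ℝ²}) has VC-dimension at most 3. -/
import Mathlib

open scoped Classical RealInnerProductSpace
open Finset

noncomputable section VCAux

private abbrev EE := EuclideanSpace ℝ (Fin 2)

/-- The quadratic "power" of a point w.r.t. a disk. -/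
private def gfun (c : EE) (r : ℝ) (v : EE) : ℝ := ‖v‖ ^ 2 - 2 * ⟪v, c⟫ + ‖c‖ ^ 2 - r ^ 2

private lemma mem_iff_g (c : EE) {r : ℝ} (hr : 0 < r) (v : EE) :
    v ∈ Metric.closedBall c r ↔ gfun c r v ≤ 0 := by
  rw [Metric.mem_closedBall, ← pow_le_pow_iff_left₀ dist_nonneg hr.le (two_ne_zero),
    dist_eq_norm, norm_sub_sq_real]
  unfold gfun
  constructor <;> intro h <;> nlinarith

private lemma exists_u (c : Fin 4 → EE) :
    ∃ u : Fin 4 → ℝ, u ≠ 0 ∧ ∑ i, u i = 0 ∧ ∑ i, u i • c i = 0 := by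
  let L : (Fin 4 → ℝ) →ₗ[ℝ] ℝ × EE :=
    { toFun := fun u => (∑ i, u i, ∑ i, u i • c i)
      map_add' := by
        intro a b
        simp [add_smul, Finset.sum_add_distrib, Prod.ext_iff]
      map_smul' := by
        intro m a
        simp [smul_smul, Finset.mul_sum, Finset.smul_sum, Prod.ext_iff] }
  have hnotinj : ¬ Function.Injective L := by
    intro hinj
    have := LinearMap.finrank_le_finrank_of_injective hinj
    simp [Module.finrank_prod, finrank_euclideanSpace] at this
  rw [injective_iff_map_eq_zero'] at hnotinj
  push_neg at hnotinj
  obtain ⟨u, hu⟩ := hnotinj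
  rcases hu with ⟨h1, h2⟩ | ⟨h1, h2⟩
  · exact ⟨u, h2, by simpa [L, Prod.ext_iff] using h1⟩
  · exact absurd (by rw [h2]; exact map_zero L) h1

private lemma sum_g_const (c : Fin 4 → EE) (r : Fin 4 → ℝ) (u : Fin 4 → ℝ)
    (hsum : ∑ i, u i = 0) (hc : ∑ i, u i • c i = 0) (v : EE) :
    ∑ i, u i * gfun (c i) (r i) v = ∑ i, u i * (‖c i‖ ^ 2 - r i ^ 2) := by
  have hip : ∑ i, u i * ⟪v, c i⟫ = 0 := by
    have h1 : ∑ i, u i * ⟪v, c i⟫ = ⟪v, ∑ i, u i • c i⟫ := by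
      rw [inner_sum]
      exact Finset.sum_congr rfl fun i _ => (real_inner_smul_right v (c i) (u i)).symm
    rw [h1, hc, inner_zero_right]
  have expand : ∑ i, u i * gfun (c i) (r i) v =
      (∑ i, u i) * ‖v‖ ^ 2 - 2 * ∑ i, u i * ⟪v, c i⟫ + ∑ i, u i * (‖c i‖ ^ 2 - r i ^ 2) := by
    unfold gfun
    rw [Finset.sum_mul, Finset.mul_sum, ← Finset.sum_sub_distrib, ← Finset.sum_add_distrib]
    congr 1; ext i; ring
  rw [expand, hsum, hip]; ring

/-- Core: four disks are never shattered by point complements. -/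
private lemma core (c : Fin 4 → EE) (r : Fin 4 → ℝ) (hr : ∀ i, 0 < r i) :
    ∃ S : Set (Fin 4), ∀ v : EE, {i | v ∉ Metric.closedBall (c i) (r i)} ≠ S := by
  obtain ⟨u, hu, hsum, hc⟩ := exists_u c
  -- a generic "key" step for a vector with a positive entry
  have key : ∀ u : Fin 4 → ℝ, (∃ i, 0 < u i) → (∑ i, u i = 0) → (∑ i, u i • c i = 0) →
      ∃ S : Set (Fin 4), ∀ v : EE, {i | v ∉ Metric.closedBall (c i) (r i)} ≠ S := by
    intro u hupos husum huc
    by_contra h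
    push_neg at h
    obtain ⟨v, hv⟩ := h {i | 0 < u i}
    obtain ⟨w, hw⟩ := h {i | u i < 0}
    have hC := sum_g_const c r u husum huc
    have hCpos : 0 < ∑ i, u i * (‖c i‖ ^ 2 - r i ^ 2) := by
      rw [← hC v]
      obtain ⟨i0, hi0⟩ := hupos
      apply Finset.sum_pos' _ ⟨i0, Finset.mem_univ i0, _⟩
      · intro i _
        by_cases hi : 0 < u i
        · have : v ∉ Metric.closedBall (c i) (r i) := by
            rw [Set.ext_iff] at hv; exact (hv i).2 hi
          rw [mem_iff_g (c i) (hr i)] at this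
          push_neg at this
          positivity
        · push_neg at hi
          have : v ∈ Metric.closedBall (c i) (r i) := by
            by_contra hvi
            exact absurd ((Set.ext_iff.mp hv i).1 hvi) (not_lt.mpr hi)
          rw [mem_iff_g (c i) (hr i)] at this
          nlinarith
      · have : v ∉ Metric.closedBall (c i0) (r i0) := (Set.ext_iff.mp hv i0).2 hi0
        rw [mem_iff_g (c i0) (hr i0)] at this
        push_neg at this
        positivity
    have hCnonpos : ∑ i, u i * (‖c i‖ ^ 2 - r i ^ 2) ≤ 0 := by
      rw [← hC w]
      apply Finset.sum_nonpos
      intro i _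
      by_cases hi : u i < 0
      · have : w ∉ Metric.closedBall (c i) (r i) := (Set.ext_iff.mp hw i).2 hi
        rw [mem_iff_g (c i) (hr i)] at this
        push_neg at this
        exact (mul_neg_of_neg_of_pos hi this).le
      · push_neg at hi
        have : w ∈ Metric.closedBall (c i) (r i) := by
          by_contra hwi
          exact absurd ((Set.ext_iff.mp hw i).1 hwi) (not_lt.mpr hi)
        rw [mem_iff_g (c i) (hr i)] at this
        exact mul_nonpos_of_nonneg_of_nonpos hi this
    exact absurd hCnonpos (not_le.mpr hCpos)
  obtain ⟨i0, hi0⟩ : ∃ i, u i ≠ 0 := Function.ne_iff.mp hu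
  rcases hi0.lt_or_gt with h | h
  · refine key (-u) ⟨i0, by simpa using h⟩ (by simpa using hsum) ?_
    simp only [Pi.neg_apply, neg_smul, Finset.sum_neg_distrib]
    rw [hc]; simp
  · exact key u ⟨i0, h⟩ hsum hc

end VCAux

/-- **VC-dimension bound for point-complement ranges of disks.**
(1) No four pairwise distinct closed disks in `ℝ²` are shattered by the ranges
`{i : v ∉ Dᵢ}`, `v ∈ ℝ²`: some subset `S` of the index set is not realized.
(2) Consequently, for a finite set `𝒟` of closed disks, the range space
`(𝒟, {{D ∈ 𝒟 : v ∉ D} : v ∈ ℝ²})` has VC-dimension at most `3`: every shattered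
subfamily has at most three members. -/
theorem vc_dim_point_complement_ranges_le_three :
    (∀ (c : Fin 4 → EuclideanSpace ℝ (Fin 2)) (r : Fin 4 → ℝ),
      (∀ i, 0 < r i) →
      (∀ i j, i ≠ j → Metric.closedBall (c i) (r i) ≠ Metric.closedBall (c j) (r j)) →
      ∃ S : Set (Fin 4), ∀ v : EuclideanSpace ℝ (Fin 2),
        {i | v ∉ Metric.closedBall (c i) (r i)} ≠ S)
    ∧
    (∀ 𝒟 : Finset (EuclideanSpace ℝ (Fin 2) × ℝ),
      (∀ D ∈ 𝒟, 0 < D.2) →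
      ∀ 𝒜 : Finset (EuclideanSpace ℝ (Fin 2) × ℝ), 𝒜 ⊆ 𝒟 →
        (∀ S ⊆ 𝒜, ∃ v : EuclideanSpace ℝ (Fin 2),
          𝒜.filter (fun D => v ∉ Metric.closedBall D.1 D.2) = S) →
        𝒜.card ≤ 3) := by
  constructor
  · intro c r hr _
    exact core c r hr
  · intro 𝒟 h𝒟 𝒜 h𝒜 hshatter
    by_contra hcard
    push_neg at hcard
    obtain ⟨B, hB𝒜, hBcard⟩ := Finset.exists_subset_card_eq (show 4 ≤ 𝒜.card by omega)
    have e : Fin 4 ≃ {x // x ∈ B} := (B.equivFin.trans (finCongr hBcard)).symm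
    set c : Fin 4 → EE := fun i => ((e i : {x // x ∈ B}) : EE × ℝ).1 with hcdef
    set r : Fin 4 → ℝ := fun i => ((e i : {x // x ∈ B}) : EE × ℝ).2 with hrdef
    have hmem : ∀ i, ((e i : {x // x ∈ B}) : EE × ℝ) ∈ 𝒜 := fun i => hB𝒜 (e i).2
    have hr : ∀ i, 0 < r i := fun i => h𝒟 _ (h𝒜 (hmem i))
    obtain ⟨S, hS⟩ := core c r hr
    set T : Finset (EE × ℝ) :=
      Finset.image (fun i => ((e i : {x // x ∈ B}) : EE × ℝ)) (Finset.univ.filter (· ∈ S)) with hTdef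
    have hT : T ⊆ 𝒜 := by
      intro x hx
      simp only [hTdef, Finset.mem_image] at hx
      obtain ⟨i, _, hi⟩ := hx
      exact hi ▸ hmem i
    obtain ⟨v, hv⟩ := hshatter T hT
    have hinj : Function.Injective (fun i : Fin 4 => ((e i : {x // x ∈ B}) : EE × ℝ)) :=
      Subtype.val_injective.comp e.injective
    apply hS v
    ext i
    simp only [Set.mem_setOf_eq]
    constructor
    · intro hvi
      have hTm : ((e i : {x // x ∈ B}) : EE × ℝ) ∈ T := by
        rw [← hv]
        exact Finset.mem_filter.mpr ⟨hmem i, hvi⟩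
      simp only [hTdef, Finset.mem_image, Finset.mem_filter, Finset.mem_univ, true_and] at hTm
      obtain ⟨j, hj, hji⟩ := hTm
      exact hinj hji ▸ hj
    · intro hiS
      have hTm : ((e i : {x // x ∈ B}) : EE × ℝ) ∈ T :=
        Finset.mem_image.mpr ⟨i, by simp [hiS], rfl⟩
      rw [← hv] at hTm
      exact (Finset.mem_filter.mp hTm).2
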